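/- Let K and m be positive integers with 2m − 1 ≤ K, let p ∈ [0,1], and define h(l) = (1/C(K, 2m−1)) · Σ_{i=m}^{2m−1} C(l,i)·C(K−l, 2m−1−i) for l ∈ {0,…,K}. Then Σ_{x=0}^{K−1} C(K−1, x) p^x (1−p)^{K−1−x} · ( h(x+1) − h(x) ) = ((2m−1)/K) · C(2m−2, m−1) · p^{m−1} (1−p)^{m−1}. Equivalently, if X ∼ Binomial(K−1, p), then E[ h(X+1) − h(X) ] = ((2m−1)/K)·C(2m−2, m−1)·p^{m−1}(1−p)^{m−1}. -/

import Mathlib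

open Finset

lemma diffS (M c l : ℕ) :
    (∑ i ∈ Finset.Icc (M+1) (2*M+1), ((l+1).choose i : ℝ) * (c.choose (2*M+1-i) : ℝ))
  - (∑ i ∈ Finset.Icc (M+1) (2*M+1), (l.choose i : ℝ) * ((c+1).choose (2*M+1-i) : ℝ))
  = (l.choose M : ℝ) * (c.choose M : ℝ) := by
  have hre : ∀ f : ℕ → ℝ, ∑ i ∈ Finset.Icc (M+1) (2*M+1), f i
      = ∑ j ∈ Finset.range (M+1), f (M+1+j) := by
    intro f
    rw [← Finset.Ico_add_one_right_eq_Icc, Finset.sum_Ico_eq_sum_range]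
    have : 2*M+1+1-(M+1) = M+1 := by omega
    rw [this]
  rw [hre, hre, ← Finset.sum_sub_distrib]
  set g : ℕ → ℝ := fun j => if j ≤ M then (l.choose (M+j) : ℝ) * (c.choose (M-j) : ℝ) else 0
    with hg
  have key : ∀ j ∈ Finset.range (M+1),
      ((l+1).choose (M+1+j) : ℝ) * (c.choose (2*M+1-(M+1+j)) : ℝ)
      - (l.choose (M+1+j) : ℝ) * ((c+1).choose (2*M+1-(M+1+j)) : ℝ) = g j - g (j+1) := by
    intro j hj
    rw [Finset.mem_range] at hj
    have hjM : j ≤ M := by omega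
    have h1 : 2*M+1-(M+1+j) = M - j := by omega
    rw [h1]
    rcases eq_or_lt_of_le hjM with hEq | hlt
    · have h0 : M - j = 0 := by omega
      have hP : (l+1).choose (M+1+j) = l.choose (M+j) + l.choose (M+1+j) := by
        have h2 : M+1+j = (M+j)+1 := by omega
        rw [h2, Nat.choose_succ_succ]
      simp only [hg, if_pos hjM, if_neg (show ¬ (j+1 ≤ M) by omega), h0,
        Nat.choose_zero_right, Nat.cast_one, mul_one, hP]
      push_cast
      ring
    · have ht : M - j = (M - (j+1)) + 1 := by omega
      have hP1 : (l+1).choose (M+1+j) = l.choose (M+j) + l.choose (M+1+j) := by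
        have : M+1+j = (M+j)+1 := by omega
        rw [this, Nat.choose_succ_succ]
      have hP2 : (c+1).choose (M-j) = c.choose (M-(j+1)) + c.choose (M-j) := by
        rw [ht, Nat.choose_succ_succ]
      rw [hP1, hP2]
      simp only [hg, if_pos hjM, if_pos (by omega : j+1 ≤ M)]
      have : M + (j+1) = M+1+j := by omega
      rw [this]
      push_cast
      ring
  rw [Finset.sum_congr rfl key, Finset.sum_range_sub' g]
  simp [hg]

lemma key3 (M R y : ℕ) (hy : y ≤ R) :
    (2*M+R).choose (M+y) * ((M+y).choose M * (M+R-y).choose M)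
    = (2*M+R).choose M * (M+R).choose M * R.choose y := by
  have hA : (2*M+R).choose (M+y) * (M+y).choose M = (2*M+R).choose M * (M+R).choose y := by
    have h := Nat.choose_mul (n := 2*M+R) (show M ≤ M+y by omega)
    rw [show 2*M+R-M = M+R from by omega, show M+y-M = y from by omega] at h
    exact h
  have hB : (M+R).choose y * (M+R-y).choose M = (M+R).choose M * R.choose y := by
    have h1 := Nat.choose_mul (n := M+R) (show y ≤ M+y by omega)
    rw [show M+y-y = M from by omega] at h1
    have h2 := Nat.choose_mul (n := M+R) (show M ≤ M+y by omega)
    rw [show M+R-M = R from by omega, show M+y-M = y from by omega] at h2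
    have hs : (M+y).choose y = (M+y).choose M := by
      rw [← Nat.choose_symm (show y ≤ M+y by omega), show M+y-y = M from by omega]
    rw [← h1, hs, h2]
  calc (2*M+R).choose (M+y) * ((M+y).choose M * (M+R-y).choose M)
      = ((2*M+R).choose (M+y) * (M+y).choose M) * (M+R-y).choose M := by ring
    _ = ((2*M+R).choose M * (M+R).choose y) * (M+R-y).choose M := by rw [hA]
    _ = (2*M+R).choose M * ((M+R).choose y * (M+R-y).choose M) := by ring
    _ = (2*M+R).choose M * ((M+R).choose M * R.choose y) := by rw [hB]
    _ = _ := by ring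

lemma keyconst (M R : ℕ) :
    (2*M+R).choose M * (M+R).choose M * (2*M+1+R)
    = (2*M+1) * (2*M).choose M * ((2*M+1+R).choose (2*M+1)) := by
  have hA : (2*M+R).choose M * (M+R).choose M = (2*M+R).choose (2*M) * (2*M).choose M := by
    have h := Nat.choose_mul (n := 2*M+R) (show M ≤ 2*M by omega)
    rw [show 2*M+R-M = M+R from by omega, show 2*M-M = M from by omega] at h
    exact h.symm
  have hB := Nat.add_one_mul_choose_eq (2*M+R) (2*M)
  -- succ (2M+R) * (2M+R).choose (2M) = (2M+R+1).choose (2M+1) * succ (2M)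
  rw [hA]
  have h2 : 2*M+1+R = (2*M+R)+1 := by omega
  rw [h2]
  calc (2*M+R).choose (2*M) * (2*M).choose M * ((2*M+R)+1)
      = (((2*M+R)+1) * (2*M+R).choose (2*M)) * (2*M).choose M := by ring
    _ = ((2*M+R+1).choose (2*M+1) * (2*M+1)) * (2*M).choose M := by
        rw [← hB]
    _ = _ := by ring

theorem statement13 (K m : ℕ) (hK : 0 < K) (hm : 0 < m) (hmK : 2 * m - 1 ≤ K)
    (p : ℝ) (hp0 : 0 ≤ p) (hp1 : p ≤ 1)
    (h : ℕ → ℝ)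
    (hh : ∀ l, h l = (∑ i ∈ Finset.Icc m (2 * m - 1),
        (l.choose i : ℝ) * ((K - l).choose (2 * m - 1 - i) : ℝ))
        / (K.choose (2 * m - 1) : ℝ)) :
    ∑ x ∈ Finset.range K,
        ((K - 1).choose x : ℝ) * p ^ x * (1 - p) ^ (K - 1 - x) * (h (x + 1) - h x)
    = (((2 * m - 1 : ℕ) : ℝ) / (K : ℝ)) * ((2 * m - 2).choose (m - 1) : ℝ) *
        p ^ (m - 1) * (1 - p) ^ (m - 1) := by
  obtain ⟨M, rfl⟩ : ∃ M, m = M + 1 := ⟨m - 1, by omega⟩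
  obtain ⟨R, rfl⟩ : ∃ R, K = 2*M+1+R := ⟨K - (2*M+1), by omega⟩
  set q : ℝ := 1 - p with hq
  have e1 : 2*(M+1)-1 = 2*M+1 := by omega
  have e2 : 2*M+1+R-1 = 2*M+R := by omega
  have e3 : 2*(M+1)-2 = 2*M := by omega
  have e4 : (M+1)-1 = M := by omega
  have hCpos : (0:ℝ) < ((2*M+1+R).choose (2*M+1) : ℝ) := by
    exact_mod_cast Nat.choose_pos (by omega)
  have hKpos : (0:ℝ) < ((2*M+1+R : ℕ) : ℝ) := by positivity
  -- step 1: difference of h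
  have hdiff : ∀ x ∈ Finset.range (2*M+1+R),
      h (x+1) - h x = ((x.choose M : ℝ) * (((2*M+R - x).choose M : ℝ)))
        / ((2*M+1+R).choose (2*M+1) : ℝ) := by
    intro x hx
    rw [Finset.mem_range] at hx
    rw [hh, hh, div_sub_div_same]
    congr 1
    simp only [e1, show 2*M+1+R - (x+1) = 2*M+R - x from by omega,
      show 2*M+1+R - x = (2*M+R - x) + 1 from by omega]
    exact diffS M (2*M+R-x) x
  rw [Finset.sum_congr rfl (fun x hx => by rw [hdiff x hx]),
    show (∑ x ∈ Finset.range (2*M+1+R), ((2*M+1+R - 1).choose x : ℝ) * p ^ x * q ^ (2*M+1+R - 1 - x) *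
      ((x.choose M : ℝ) * ((2*M+R - x).choose M : ℝ) / ((2*M+1+R).choose (2*M+1) : ℝ)))
      = (∑ x ∈ Finset.range (2*M+1+R), ((2*M+R).choose x : ℝ) * p ^ x * q ^ (2*M+R - x) *
      ((x.choose M : ℝ) * ((2*M+R - x).choose M : ℝ))) / ((2*M+1+R).choose (2*M+1) : ℝ)
      from by rw [Finset.sum_div]; exact Finset.sum_congr rfl (fun x hx => by rw [e2]; ring)]
  -- step 2: evaluate the numerator sum
  have hnum : (∑ x ∈ Finset.range (2*M+1+R), ((2*M+R).choose x : ℝ) * p ^ x * q ^ (2*M+R - x) *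
      ((x.choose M : ℝ) * ((2*M+R - x).choose M : ℝ)))
      = ((2*M+R).choose M : ℝ) * ((M+R).choose M : ℝ) * p ^ M * q ^ M := by
    rw [← Finset.sum_subset (show Finset.Icc M (M+R) ⊆ Finset.range (2*M+1+R) from by
        intro x hx; rw [Finset.mem_Icc] at hx; rw [Finset.mem_range]; omega)
      (by
        intro x hx hx2
        rw [Finset.mem_range] at hx
        rw [Finset.mem_Icc] at hx2
        rcases (by omega : x < M ∨ 2*M+R - x < M) with hc | hc
        · rw [Nat.choose_eq_zero_of_lt hc]; push_cast; ring
        · rw [Nat.choose_eq_zero_of_lt hc]; push_cast; ring)]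
    rw [← Finset.Ico_add_one_right_eq_Icc, Finset.sum_Ico_eq_sum_range,
      show M+R+1-M = R+1 from by omega]
    have hterm : ∀ y ∈ Finset.range (R+1),
        ((2*M+R).choose (M+y) : ℝ) * p ^ (M+y) * q ^ (2*M+R - (M+y)) *
          (((M+y).choose M : ℝ) * ((2*M+R - (M+y)).choose M : ℝ))
        = (((2*M+R).choose M : ℝ) * ((M+R).choose M : ℝ) * p ^ M * q ^ M) *
          (p ^ y * q ^ (R - y) * (R.choose y : ℝ)) := by
      intro y hy
      rw [Finset.mem_range] at hy
      have hy' : y ≤ R := by omega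
      have hc := key3 M R y hy'
      rw [show 2*M+R - (M+y) = M+R-y from by omega,
        show p ^ (M+y) = p ^ M * p ^ y from by rw [pow_add],
        show q ^ (M+R-y) = q ^ M * q ^ (R-y) from by
          rw [← pow_add]; congr 1; omega]
      have := congrArg (Nat.cast (R := ℝ)) hc
      push_cast at this ⊢
      linear_combination (p ^ M * p ^ y * q ^ M * q ^ (R - y)) * this
    rw [Finset.sum_congr rfl hterm, ← Finset.mul_sum]
    have hbin : (∑ y ∈ Finset.range (R+1), p ^ y * q ^ (R - y) * (R.choose y : ℝ)) = 1 := by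
      have := add_pow p q R
      rw [show p + q = 1 from by rw [hq]; ring, one_pow] at this
      exact this.symm
    rw [hbin, mul_one]
  rw [hnum]
  -- step 3: the constant identity
  rw [e1, e3, e4]
  have hc := keyconst M R
  have hcr := congrArg (Nat.cast (R := ℝ)) hc
  push_cast at hcr
  rw [div_mul_eq_mul_div, div_mul_eq_mul_div, div_mul_eq_mul_div, div_eq_div_iff hCpos.ne' hKpos.ne']
  push_cast
  linear_combination (p ^ M * q ^ M) * hcr
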